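/- Let X₁ ≠ X₂ be vectors in 𝔽₂ⁿ and let f : 𝔽₂ⁿ → 𝔽₂ satisfy the promise that for every q ∈ 𝔽₂ⁿ, f(q) = q·X₁ or f(q) = q·X₂. Then C_{X₁}(f) + C_{X₂}(f) = N, where N = 2ⁿ. -/
import Mathlib


/-- The inner product of two vectors in `𝔽₂ⁿ`. -/
def dotp {n : ℕ} (q X : Fin n → ZMod 2) : ZMod 2 := ∑ i, q i * X i

/-- The Deutsch–Jozsa coefficient `C_j(f) = #{q : j·q = f q} − #{q : j·q ≠ f q}`. -/
def coefC {n : ℕ} (f : (Fin n → ZMod 2) → ZMod 2) (j : Fin n → ZMod 2) : ℤ :=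
  ((Finset.univ.filter (fun q : Fin n → ZMod 2 => dotp j q = f q)).card : ℤ) -
  ((Finset.univ.filter (fun q : Fin n → ZMod 2 => dotp j q ≠ f q)).card : ℤ)

lemma dotp_comm {n : ℕ} (a b : Fin n → ZMod 2) : dotp a b = dotp b a :=
  Finset.sum_congr rfl (fun i _ => mul_comm _ _)

lemma dotp_add_left {n : ℕ} (a b c : Fin n → ZMod 2) :
    dotp (a + b) c = dotp a c + dotp b c := by
  unfold dotp
  rw [← Finset.sum_add_distrib]
  exact Finset.sum_congr rfl fun i _ => add_mul _ _ _

lemma dotp_single {n : ℕ} (i : Fin n) (X : Fin n → ZMod 2) :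
    dotp (Pi.single i 1) X = X i := by
  unfold dotp
  simp [Pi.single_apply]

lemma card_univ_pow {n : ℕ} :
    (Finset.univ : Finset (Fin n → ZMod 2)).card = 2 ^ n := by
  simp [Finset.card_univ]

lemma half_count {n : ℕ} (X₁ X₂ : Fin n → ZMod 2) (hX : X₁ ≠ X₂) :
    2 * (Finset.univ.filter (fun q : Fin n → ZMod 2 => dotp q X₁ = dotp q X₂)).card
      = 2 ^ n := by
  obtain ⟨i, hi⟩ := Function.ne_iff.mp hX
  set e : Fin n → ZMod 2 := Pi.single i 1 with he
  have hde : dotp e X₁ ≠ dotp e X₂ := by rw [dotp_single, dotp_single]; exact hi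
  have key : ∀ a b c d : ZMod 2, c ≠ d → ((a + c = b + d) ↔ ¬ (a = b)) := by decide
  have hinv : ∀ q : Fin n → ZMod 2, q + e + e = q := by
    intro q; funext j; simp [CharTwo.add_self_eq_zero, add_assoc]
  have hbij : (Finset.univ.filter (fun q : Fin n → ZMod 2 => dotp q X₁ = dotp q X₂)).card
      = (Finset.univ.filter (fun q : Fin n → ZMod 2 => ¬ dotp q X₁ = dotp q X₂)).card := by
    apply Finset.card_bij' (i := fun q _ => q + e) (j := fun q _ => q + e)
    · intro q hq
      simp only [Finset.mem_filter, Finset.mem_univ, true_and] at hq ⊢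
      rw [dotp_add_left, dotp_add_left]
      intro h
      exact (key _ _ _ _ hde).mp h hq
    · intro q hq
      simp only [Finset.mem_filter, Finset.mem_univ, true_and] at hq ⊢
      rw [dotp_add_left, dotp_add_left]
      by_contra h
      exact hq (not_not.mp ((not_iff_not.mpr (key _ _ _ _ hde)).mp h))
    · intro q _; exact hinv q
    · intro q _; exact hinv q
  have hsplit := Finset.card_filter_add_card_filter_not
    (s := (Finset.univ : Finset (Fin n → ZMod 2)))
    (p := fun q => dotp q X₁ = dotp q X₂)
  rw [card_univ_pow] at hsplit
  omega

/-- If `f` satisfies the two-secret promise for distinct `X₁ ≠ X₂`, then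
`C_{X₁}(f) + C_{X₂}(f) = N` with `N = 2ⁿ`. -/
theorem coefC_add_eq_N {n : ℕ} (X₁ X₂ : Fin n → ZMod 2) (hX : X₁ ≠ X₂)
    (f : (Fin n → ZMod 2) → ZMod 2)
    (hf : ∀ q, f q = dotp q X₁ ∨ f q = dotp q X₂) :
    coefC f X₁ + coefC f X₂ = 2 ^ n := by
  classical
  have e1 := Finset.card_filter_add_card_filter_not
    (s := (Finset.univ : Finset (Fin n → ZMod 2))) (p := fun q => dotp X₁ q = f q)
  have e2 := Finset.card_filter_add_card_filter_not
    (s := (Finset.univ : Finset (Fin n → ZMod 2))) (p := fun q => dotp X₂ q = f q)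
  rw [card_univ_pow] at e1 e2
  set A := Finset.univ.filter (fun q : Fin n → ZMod 2 => dotp X₁ q = f q) with hA
  set B := Finset.univ.filter (fun q : Fin n → ZMod 2 => dotp X₂ q = f q) with hB
  have hunion : A ∪ B = Finset.univ := by
    ext q
    simp only [Finset.mem_union, hA, hB, Finset.mem_filter, Finset.mem_univ, true_and,
      iff_true]
    rcases hf q with h | h
    · left; rw [dotp_comm]; exact h.symm
    · right; rw [dotp_comm]; exact h.symm
  have hinter : A ∩ B = Finset.univ.filter (fun q : Fin n → ZMod 2 => dotp q X₁ = dotp q X₂) := by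
    ext q
    simp only [Finset.mem_inter, hA, hB, Finset.mem_filter, Finset.mem_univ, true_and]
    constructor
    · rintro ⟨h1, h2⟩; rw [dotp_comm q X₁, dotp_comm q X₂, h1, h2]
    · intro h
      rcases hf q with h' | h'
      · rw [dotp_comm X₁ q, dotp_comm X₂ q, ← h]; exact ⟨h'.symm, h'.symm⟩
      · rw [dotp_comm X₁ q, dotp_comm X₂ q, h]; exact ⟨h'.symm, h'.symm⟩
  have e3 : A.card + B.card = 2 ^ n + (A ∩ B).card := by
    have := Finset.card_union_add_card_inter A B
    rw [hunion, card_univ_pow] at this; omega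
  have e4 : 2 * (A ∩ B).card = 2 ^ n := by rw [hinter]; exact half_count X₁ X₂ hX
  have hAle : A.card ≤ 2 ^ n := by
    rw [← card_univ_pow (n := n)]; exact Finset.card_le_card (Finset.filter_subset _ _)
  have hBle : B.card ≤ 2 ^ n := by
    rw [← card_univ_pow (n := n)]; exact Finset.card_le_card (Finset.filter_subset _ _)
  clear_value A B
  unfold coefC
  simp only [ne_eq, Finset.filter_not, Finset.card_sdiff_of_subset (Finset.filter_subset _ _),
    card_univ_pow]
  rw [← hA, ← hB]
  push_cast [Nat.cast_sub hAle, Nat.cast_sub hBle] at e3 e4 ⊢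
  linarith
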